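/- Suppose X is an uncountable Polish space, E is an equivalence relation on X, and E₀ is Borel reducible to E (there is a Borel measurable φ : (ℕ → Bool) → X with f E₀ g ↔ φ f E φ g). Then E is not smooth: there is no Borel measurable S : X → ℝ such that for all x₁, x₂ ∈ X, x₁ E x₂ ↔ S x₁ = S x₂. -/

import Mathlib

/-- The equivalence relation `E₀` on Cantor space: eventual equality. -/
def E0 (f g : ℕ → Bool) : Prop := ∃ N : ℕ, ∀ n : ℕ, N ≤ n → f n = g n

open Filter Set Topology

lemma E0.symm {f g} (h : E0 f g) : E0 g f := by
  obtain ⟨N, hN⟩ := h; exact ⟨N, fun n hn => (hN n hn).symm⟩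

/-- flip homeomorphism -/
def flipHomeo (σ : ℕ → Bool) : (ℕ → Bool) ≃ₜ (ℕ → Bool) where
  toEquiv := Function.Involutive.toPerm (fun f => fun n => xor (σ n) (f n))
    (fun f => by funext n; simp only []; cases σ n <;> cases f n <;> rfl)
  continuous_toFun := continuous_pi fun n =>
    (continuous_of_discreteTopology (α := Bool) (β := Bool) (f := fun b => xor (σ n) b)).comp
      (continuous_apply n)
  continuous_invFun := continuous_pi fun n =>
    (continuous_of_discreteTopology (α := Bool) (β := Bool) (f := fun b => xor (σ n) b)).comp
      (continuous_apply n)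

lemma flipHomeo_apply (σ f : ℕ → Bool) (n : ℕ) : flipHomeo σ f n = xor (σ n) (f n) := rfl

lemma cylinder_subset_of_isOpen {U : Set (ℕ → Bool)} (hU : IsOpen U) {f} (hf : f ∈ U) :
    ∃ N, {g : ℕ → Bool | ∀ i < N, g i = f i} ⊆ U := by
  have h : U ∈ nhds f := hU.mem_nhds hf
  rw [nhds_pi] at h
  obtain ⟨I, hIfin, t, ht, hsub⟩ := Filter.mem_pi.mp h
  obtain ⟨m, hm⟩ := hIfin.bddAbove
  refine ⟨m + 1, fun g hg => hsub fun i hi => ?_⟩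
  have : g i = f i := hg i (Nat.lt_succ_of_le (hm hi))
  rw [this]
  exact mem_of_mem_nhds (ht i)

lemma isMeagre_iUnion' {X : Type*} [TopologicalSpace X] {ι : Sort*} [Countable ι]
    {s : ι → Set X} (h : ∀ i, IsMeagre (s i)) : IsMeagre (⋃ i, s i) := by
  rw [IsMeagre, compl_iUnion]; exact countable_iInter_mem.mpr h

lemma isMeagre_singleton (x : ℕ → Bool) : IsMeagre {x} := by
  rw [IsMeagre]
  apply residual_of_dense_open isOpen_compl_singleton
  rw [← interior_eq_empty_iff_dense_compl]
  by_contra h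
  obtain ⟨y, hy⟩ := nonempty_iff_ne_empty.mpr h
  have hyx : y = x := mem_singleton_iff.mp (interior_subset hy)
  subst hyx
  obtain ⟨N, hN⟩ := cylinder_subset_of_isOpen isOpen_interior hy
  set g : ℕ → Bool := fun n => if n < N then y n else !(y n) with hg
  have : g ∈ {h : ℕ → Bool | ∀ i < N, h i = y i} := fun i hi => if_pos hi
  have hgx : g = y := mem_singleton_iff.mp (interior_subset (hN this))
  have : g N = y N := by rw [hgx]
  simp only [hg, lt_irrefl, if_neg (lt_irrefl N)] at this
  exact (Bool.not_ne_self (y N)) this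

lemma isMeagre_class (f : ℕ → Bool) : IsMeagre {g | E0 f g} := by
  have hsub : {g | E0 f g} ⊆ ⋃ N : ℕ, ⋃ v : Fin N → Bool,
      {fun n => if h : n < N then v ⟨n, h⟩ else f n} := by
    rintro g ⟨N, hN⟩
    refine mem_iUnion.mpr ⟨N, mem_iUnion.mpr ⟨fun i => g i, ?_⟩⟩
    simp only [mem_singleton_iff]
    funext n
    by_cases h : n < N
    · simp [h]
    · simp only [dif_neg h]
      exact (hN n (le_of_not_gt h)).symm
  exact IsMeagre.mono hsub (isMeagre_iUnion' fun N => isMeagre_iUnion' fun v =>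
    isMeagre_singleton _)

/-- topological zero-one law for E0-invariant Baire measurable sets -/
lemma meagre_or_residual {A : Set (ℕ → Bool)} (hA : BaireMeasurableSet A)
    (hinv : ∀ f g, E0 f g → f ∈ A → g ∈ A) :
    IsMeagre A ∨ A ∈ residual (ℕ → Bool) := by
  obtain ⟨U, hUo, hAU⟩ := hA.residualEq_isOpen
  rcases eq_empty_or_nonempty U with rfl | ⟨f, hf⟩
  · left
    rw [IsMeagre]
    have : ∀ᶠ x in residual (ℕ → Bool), x ∉ A := by
      filter_upwards [hAU] with x hx
      intro hxA
      have h2 : x ∈ (∅ : Set (ℕ → Bool)) := (iff_of_eq hx).mp hxA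
      exact h2
    exact this
  · right
    obtain ⟨N, hN⟩ := cylinder_subset_of_isOpen hUo hf
    have hW : {x | x ∈ A ↔ x ∈ U} ∈ residual (ℕ → Bool) := by
      filter_upwards [hAU] with x hx
      exact iff_of_eq hx
    have key : ∀ v : Fin N → Bool, IsMeagre (Aᶜ ∩ {g | ∀ i : ℕ, ∀ h : i < N, g i = v ⟨i, h⟩}) := by
      intro v
      set σ : ℕ → Bool := fun n => if h : n < N then xor (f n) (v ⟨n, h⟩) else false with hσ
      have hmW : IsMeagre {x | x ∈ A ↔ x ∈ U}ᶜ := by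
        rw [IsMeagre, compl_compl]; exact hW
      have hmpre : IsMeagre ((flipHomeo σ) ⁻¹' {x | x ∈ A ↔ x ∈ U}ᶜ) :=
        hmW.preimage_of_isOpenMap (flipHomeo σ).continuous (flipHomeo σ).isOpenMap
      refine hmpre.mono ?_
      rintro g ⟨hgA, hgv⟩
      have hE : E0 g (flipHomeo σ g) := by
        refine ⟨N, fun n hn => ?_⟩
        rw [flipHomeo_apply]
        simp [hσ, Nat.not_lt_of_le hn]
      have hgc : flipHomeo σ g ∈ U := by
        apply hN
        intro i hi
        rw [flipHomeo_apply]
        simp only [hσ, dif_pos hi, hgv i hi]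
        cases f i <;> cases v ⟨i, hi⟩ <;> rfl
      have hE' : E0 (flipHomeo σ g) g := by
        obtain ⟨M, hM⟩ := hE
        exact ⟨M, fun n hn => (hM n hn).symm⟩
      have hgA' : flipHomeo σ g ∉ A := fun h => hgA (hinv _ _ hE' h)
      intro h
      exact hgA' (h.mpr hgc)
    have hcover : Aᶜ ⊆ ⋃ v : Fin N → Bool,
        (Aᶜ ∩ {g | ∀ i : ℕ, ∀ h : i < N, g i = v ⟨i, h⟩}) := by
      intro g hg
      exact mem_iUnion.mpr ⟨fun i => g i, hg, fun i hi => rfl⟩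
    have : IsMeagre Aᶜ := (isMeagre_iUnion' key).mono hcover
    rw [IsMeagre, compl_compl] at this
    exact this

/-- If `X` is an uncountable Polish space, `E` an equivalence relation on `X`, and `E₀` is
Borel reducible to `E`, then `E` is not smooth. -/
lemma not_meagre_and_residual {s : Set (ℕ → Bool)} (h1 : s ∈ residual (ℕ → Bool))
    (h2 : IsMeagre s) : False := by
  letI := TopologicalSpace.upgradeIsCompletelyMetrizable (ℕ → Bool)
  have h3 : s ∩ sᶜ ∈ residual (ℕ → Bool) := Filter.inter_mem h1 h2
  rw [inter_compl_self] at h3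
  have hd : Dense (∅ : Set (ℕ → Bool)) := dense_of_mem_residual h3
  simpa using hd.nonempty

theorem not_smooth_of_E0_reducible
    (X : Type) [TopologicalSpace X] [PolishSpace X] [Uncountable X]
    [MeasurableSpace X] [BorelSpace X]
    (E : X → X → Prop) (hE : Equivalence E)
    (φ : (ℕ → Bool) → X) (hφ : Measurable φ)
    (hred : ∀ f g : ℕ → Bool, E0 f g ↔ E (φ f) (φ g)) :
    ¬ ∃ S : X → ℝ, Measurable S ∧ ∀ x₁ x₂ : X, E x₁ x₂ ↔ S x₁ = S x₂ := by
  rintro ⟨S, hS, hSE⟩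
  set ψ : (ℕ → Bool) → ℝ := S ∘ φ with hψdef
  have hψ : Measurable ψ := hS.comp hφ
  have hiff : ∀ f g : ℕ → Bool, E0 f g ↔ ψ f = ψ g := fun f g =>
    (hred f g).trans (hSE (φ f) (φ g))
  -- dichotomy for preimages of measurable sets
  have dich : ∀ B : Set ℝ, MeasurableSet B →
      IsMeagre (ψ ⁻¹' B) ∨ ψ ⁻¹' B ∈ residual (ℕ → Bool) := by
    intro B hB
    apply meagre_or_residual ((hψ hB).baireMeasurableSet)
    intro f g hfg hf
    have : ψ f = ψ g := (hiff f g).mp hfg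
    simpa [Set.mem_preimage, ← this] using hf
  -- the set of rational upper cut points
  set T : Set ℝ := {x | ∃ q : ℚ, (q : ℝ) = x ∧ ψ ⁻¹' (Iic (q : ℝ)) ∈ residual (ℕ → Bool)}
    with hT
  have hTne : T.Nonempty := by
    by_contra hemp
    have hall : ∀ n : ℕ, IsMeagre (ψ ⁻¹' (Iic (n : ℝ))) := by
      intro n
      rcases dich (Iic (n : ℝ)) measurableSet_Iic with h | h
      · exact h
      · exact absurd (⟨((n : ℚ) : ℝ), (n : ℚ), rfl,
          by rw [Rat.cast_natCast]; exact h⟩ : T.Nonempty) hemp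
    have huniv : (univ : Set (ℕ → Bool)) ⊆ ⋃ n : ℕ, ψ ⁻¹' (Iic (n : ℝ)) := by
      intro g _
      obtain ⟨n, hn⟩ := exists_nat_ge (ψ g)
      exact mem_iUnion.mpr ⟨n, hn⟩
    have : IsMeagre (univ : Set (ℕ → Bool)) := (isMeagre_iUnion' hall).mono huniv
    rw [IsMeagre, compl_univ] at this
    exact not_meagre_and_residual this (by rw [IsMeagre, compl_empty]; exact univ_mem)
  have hTbdd : BddBelow T := by
    have : ∃ n : ℕ, IsMeagre (ψ ⁻¹' (Iic (-(n : ℝ)))) := by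
      by_contra hno
      push_neg at hno
      have hall : ∀ n : ℕ, ψ ⁻¹' (Iic (-(n : ℝ))) ∈ residual (ℕ → Bool) := by
        intro n
        rcases dich (Iic (-(n : ℝ))) measurableSet_Iic with h | h
        · exact absurd h (hno n)
        · exact h
      have hint : (⋂ n : ℕ, ψ ⁻¹' (Iic (-(n : ℝ)))) ∈ residual (ℕ → Bool) :=
        countable_iInter_mem.mpr hall
      have hempty : (⋂ n : ℕ, ψ ⁻¹' (Iic (-(n : ℝ)))) = ∅ := by
        ext g
        simp only [mem_iInter, mem_preimage, mem_Iic, mem_empty_iff_false, iff_false, not_forall]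
        obtain ⟨n, hn⟩ := exists_nat_gt (-(ψ g))
        exact ⟨n, by push_neg; linarith⟩
      rw [hempty] at hint
      exact not_meagre_and_residual hint (by rw [IsMeagre, compl_empty]; exact univ_mem)
    obtain ⟨n₀, hn₀⟩ := this
    refine ⟨-(n₀ : ℝ), fun x hx => ?_⟩
    obtain ⟨q, rfl, hq⟩ := hx
    by_contra hlt
    push_neg at hlt
    have hsub : ψ ⁻¹' (Iic (q : ℝ)) ⊆ ψ ⁻¹' (Iic (-(n₀ : ℝ))) :=
      preimage_mono (Iic_subset_Iic.mpr (le_of_lt hlt))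
    exact not_meagre_and_residual hq (hn₀.mono hsub)
  set r : ℝ := sInf T with hr
  -- Iio r preimage is meagre
  have hIio : IsMeagre (ψ ⁻¹' (Iio r)) := by
    have hsub : ψ ⁻¹' (Iio r) ⊆ ⋃ q : {q : ℚ // (q : ℝ) < r}, ψ ⁻¹' (Iic ((q : ℚ) : ℝ)) := by
      intro g hg
      obtain ⟨q, hq1, hq2⟩ := exists_rat_btwn (show ψ g < r from hg)
      exact mem_iUnion.mpr ⟨⟨q, hq2⟩, le_of_lt hq1⟩
    refine (isMeagre_iUnion' fun q => ?_).mono hsub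
    rcases dich (Iic ((q : ℚ) : ℝ)) measurableSet_Iic with h | h
    · exact h
    · exfalso
      have : ((q : ℚ) : ℝ) ∈ T := ⟨q, rfl, h⟩
      exact absurd (csInf_le hTbdd this) (not_le.mpr q.2)
  -- Iic r preimage is residual
  have hIic : ψ ⁻¹' (Iic r) ∈ residual (ℕ → Bool) := by
    have heq : ψ ⁻¹' (Iic r) = ⋂ q : {q : ℚ // r < (q : ℝ)}, ψ ⁻¹' (Iic ((q : ℚ) : ℝ)) := by
      ext g
      simp only [mem_preimage, mem_Iic, mem_iInter]
      constructor
      · intro h q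
        exact le_trans h (le_of_lt q.2)
      · intro h
        by_contra hgt
        push_neg at hgt
        obtain ⟨q, hq1, hq2⟩ := exists_rat_btwn hgt
        exact absurd (h ⟨q, hq1⟩) (not_le.mpr hq2)
    rw [heq]
    refine countable_iInter_mem.mpr fun q => ?_
    obtain ⟨t, htT, htq⟩ := exists_lt_of_csInf_lt hTne q.2
    obtain ⟨q', rfl, hq'⟩ := htT
    exact mem_of_superset hq' (preimage_mono (Iic_subset_Iic.mpr (le_of_lt htq)))
  -- singleton preimage residual
  have hsing : ψ ⁻¹' {r} ∈ residual (ℕ → Bool) := by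
    have : ψ ⁻¹' (Iic r) ∩ (ψ ⁻¹' (Iio r))ᶜ ∈ residual (ℕ → Bool) :=
      Filter.inter_mem hIic hIio
    have heq : ψ ⁻¹' (Iic r) ∩ (ψ ⁻¹' (Iio r))ᶜ = ψ ⁻¹' {r} := by
      ext g
      simp only [mem_inter_iff, mem_preimage, mem_Iic, mem_compl_iff, mem_Iio, not_lt,
        mem_singleton_iff]
      constructor
      · rintro ⟨h1, h2⟩; exact le_antisymm h1 h2
      · intro h; exact ⟨le_of_eq h, ge_of_eq h⟩
    rwa [heq] at this
  -- but it's meagre: contained in one E0 class or empty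
  have hmeag : IsMeagre (ψ ⁻¹' {r}) := by
    rcases eq_empty_or_nonempty (ψ ⁻¹' {r}) with h | ⟨f, hf⟩
    · rw [h]; exact IsMeagre.empty
    · refine (isMeagre_class f).mono ?_
      intro g hg
      have : ψ f = ψ g := by
        rw [mem_preimage, mem_singleton_iff] at hf hg
        rw [hf, hg]
      exact (hiff f g).mpr this
  exact not_meagre_and_residual hsing hmeag
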